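/- Let I ⊆ ℝ be an interval, let p, q : I → ℝ be strictly positive functions such that p/q is strictly increasing on I, and define the kernel k(x,y) = p(min(x,y))·q(max(x,y)). Then for any n ≥ 1 and any strictly increasing points x₁ < x₂ < ⋯ < xₙ in I, the n×n matrix K with entries K_{ij} = k(x_i, x_j) is positive definite. -/

import Mathlib

/-- For a one-dimensional Markov kernel
`k(x,y) = p(min(x,y)) * q(max(x,y))` on an interval `I ⊆ ℝ`, with `p, q` strictly
positive on `I` and `p/q` strictly increasing on `I`, the kernel matrix on any
strictly increasing tuple of points of `I` is positive definite. -/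
theorem markov_kernel_matrix_posDef
    (I : Set ℝ) (hI : I.OrdConnected)
    (p q : ℝ → ℝ)
    (hp : ∀ x ∈ I, 0 < p x) (hq : ∀ x ∈ I, 0 < q x)
    (hpq : StrictMonoOn (fun x => p x / q x) I)
    (n : ℕ) (hn : 1 ≤ n)
    (x : Fin n → ℝ) (hxI : ∀ i, x i ∈ I) (hx : StrictMono x) :
    (Matrix.of fun i j : Fin n =>
      p (min (x i) (x j)) * q (max (x i) (x j))).PosDef := by
  classical
  have hn' : 0 < n := hn
  set r : Fin n → ℝ := fun i => p (x i) / q (x i) with hr_def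
  have hrpos : ∀ i, 0 < r i := fun i => div_pos (hp _ (hxI i)) (hq _ (hxI i))
  have hrmono : StrictMono r := fun i j hij => hpq (hxI i) (hxI j) (hx hij)
  set r' : ℕ → ℝ := fun m => r ⟨min m (n-1), by omega⟩ with hr'_def
  have hr' : ∀ i : Fin n, r' i.1 = r i := by
    intro i
    simp only [hr'_def]
    congr 1
    ext
    simp only []
    omega
  set c : ℕ → ℝ := fun m => Nat.rec (r' 0) (fun k _ => r' (k+1) - r' k) m with hc_def
  have hc0 : c 0 = r' 0 := rfl
  have hcs : ∀ k, c (k+1) = r' (k+1) - r' k := fun k => rfl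
  have hsum : ∀ m, (∑ k ∈ Finset.range (m+1), c k) = r' m := by
    intro m
    induction m with
    | zero => simp [hc0]
    | succ m ih => rw [Finset.sum_range_succ, ih, hcs]; ring
  have hcpos : ∀ k, k < n → 0 < c k := by
    intro k hk
    cases k with
    | zero => rw [hc0, hr' ⟨0, hn'⟩]; exact hrpos _
    | succ k =>
      rw [hcs, hr' ⟨k+1, hk⟩, hr' ⟨k, by omega⟩]
      have : (⟨k, by omega⟩ : Fin n) < ⟨k+1, hk⟩ := by simp [Fin.lt_def]
      linarith [hrmono this]
  have key : ∀ m, m < n → (∑ k ∈ Finset.range n, if k ≤ m then c k else 0) = r' m := by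
    intro m hm
    rw [← hsum m]
    rw [← Finset.sum_subset (Finset.range_subset_range.2 (by omega : m + 1 ≤ n))
      (by intro k _ hk; rw [if_neg]; simp only [Finset.mem_range] at hk; omega)]
    refine Finset.sum_congr rfl fun k hk => ?_
    rw [if_pos]
    exact Nat.lt_succ_iff.mp (Finset.mem_range.mp hk)
  -- kernel identity
  have kid : ∀ i j : Fin n,
      p (min (x i) (x j)) * q (max (x i) (x j)) = q (x i) * q (x j) * r (min i j) := by
    have base : ∀ i j : Fin n, i ≤ j →
        p (min (x i) (x j)) * q (max (x i) (x j)) = q (x i) * q (x j) * r (min i j) := by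
      intro i j hij
      have hxij : x i ≤ x j := hx.monotone hij
      rw [min_eq_left hxij, max_eq_right hxij, min_eq_left hij]
      have hqne : q (x i) ≠ 0 := ne_of_gt (hq _ (hxI i))
      simp only [hr_def]
      field_simp [hr_def]
    intro i j
    rcases le_total i j with h | h
    · exact base i j h
    · rw [min_comm (x i), max_comm (x i), min_comm i, mul_comm (q (x i))]
      exact base j i h
  -- indicator decomposition
  have ind : ∀ i j : Fin n, r (min i j) =
      ∑ k ∈ Finset.range n, c k * ((if k ≤ i.1 then (1:ℝ) else 0) * (if k ≤ j.1 then (1:ℝ) else 0)) := by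
    intro i j
    rw [← hr' (min i j), ← key (min i j).1 (min i j).2]
    refine Finset.sum_congr rfl fun k _ => ?_
    have hmin : (min i j).1 = min i.1 j.1 := by
      rcases le_total i j with h | h
      · rw [min_eq_left h, min_eq_left (by exact_mod_cast h)]
      · rw [min_eq_right h, min_eq_right (by exact_mod_cast h)]
    by_cases h1 : k ≤ i.1 <;> by_cases h2 : k ≤ j.1 <;>
      simp [h1, h2, hmin, le_min_iff]
  rw [Matrix.posDef_iff_dotProduct_mulVec]
  constructor
  · -- Hermitian
    ext i j
    simp only [Matrix.conjTranspose_apply, Matrix.of_apply, star_trivial,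
      min_comm (x j), max_comm (x j)]
  · intro v hv
    simp only [dotProduct, Matrix.mulVec, Matrix.of_apply, Pi.star_apply,
      star_trivial]
    set w : Fin n → ℝ := fun i => v i * q (x i) with hw_def
    set S : ℕ → ℝ := fun k => ∑ i : Fin n, (if k ≤ i.1 then w i else 0) with hS_def
    have main : (∑ i, v i * ∑ j, p (min (x i) (x j)) * q (max (x i) (x j)) * v j)
        = ∑ k ∈ Finset.range n, c k * (S k * S k) := by
      calc (∑ i, v i * ∑ j, p (min (x i) (x j)) * q (max (x i) (x j)) * v j)
          = ∑ i, ∑ j, ∑ k ∈ Finset.range n,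
              c k * ((if k ≤ i.1 then w i else 0) * (if k ≤ j.1 then w j else 0)) := by
            rw [Finset.sum_congr rfl]
            intro i _
            rw [Finset.mul_sum]
            refine Finset.sum_congr rfl fun j _ => ?_
            rw [kid i j, ind i j, Finset.mul_sum, Finset.sum_mul, Finset.mul_sum]
            refine Finset.sum_congr rfl fun k _ => ?_
            by_cases h1 : k ≤ i.1 <;> by_cases h2 : k ≤ j.1 <;>
              simp [h1, h2, hw_def] <;> ring
        _ = ∑ i, ∑ k ∈ Finset.range n, ∑ j,
              c k * ((if k ≤ i.1 then w i else 0) * (if k ≤ j.1 then w j else 0)) :=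
            Finset.sum_congr rfl fun i _ => Finset.sum_comm
        _ = ∑ k ∈ Finset.range n, ∑ i, ∑ j,
              c k * ((if k ≤ i.1 then w i else 0) * (if k ≤ j.1 then w j else 0)) :=
            Finset.sum_comm
        _ = ∑ k ∈ Finset.range n, c k * (S k * S k) := by
            refine Finset.sum_congr rfl fun k _ => ?_
            rw [hS_def]
            rw [Finset.sum_mul_sum]
            rw [Finset.mul_sum]
            refine Finset.sum_congr rfl fun i _ => ?_
            rw [Finset.mul_sum]
    rw [main]
    -- find the largest index with w ≠ 0
    have hwne : ∃ i, w i ≠ 0 := by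
      by_contra h
      push_neg at h
      apply hv
      funext i
      have := h i
      have hqne : q (x i) ≠ 0 := ne_of_gt (hq _ (hxI i))
      simp only [hw_def, mul_eq_zero] at this
      tauto
    obtain ⟨i, hi⟩ := hwne
    set T : Finset (Fin n) := Finset.univ.filter (fun i => w i ≠ 0) with hT
    have hTne : T.Nonempty := ⟨i, by simp [hT, hi]⟩
    set i₀ := T.max' hTne with hi₀def
    have hwi₀ : w i₀ ≠ 0 := by
      have := T.max'_mem hTne
      simp only [hT, Finset.mem_filter] at this
      exact this.2
    have hmax : ∀ j : Fin n, i₀ < j → w j = 0 := by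
      intro j hj
      by_contra hwj
      have hjT : j ∈ T := by simp [hT, hwj]
      exact absurd (T.le_max' j hjT) (not_le.mpr hj)
    have hSi₀ : S i₀.1 = w i₀ := by
      simp only [hS_def]
      have heq : (∑ i : Fin n, if i₀.1 ≤ i.1 then w i else 0)
          = if i₀.1 ≤ i₀.1 then w i₀ else 0 := by
        apply Finset.sum_eq_single
        · intro b _ hb
          by_cases hle : i₀.1 ≤ b.1
          · have hlt : i₀ < b := by
              rw [Fin.lt_def]
              have hne : (b : ℕ) ≠ (i₀ : ℕ) := fun h => hb (Fin.val_injective h)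
              omega
            rw [if_pos hle, hmax b hlt]
          · rw [if_neg hle]
        · intro h; exact absurd (Finset.mem_univ i₀) h
      rw [heq, if_pos le_rfl]
    apply Finset.sum_pos'
    · intro k hk
      exact mul_nonneg (hcpos k (Finset.mem_range.mp hk)).le (mul_self_nonneg _)
    · refine ⟨i₀.1, Finset.mem_range.mpr i₀.2, ?_⟩
      rw [hSi₀]
      exact mul_pos (hcpos _ i₀.2) (mul_self_pos.mpr hwi₀)
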